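/- Let Z be a cyclic order on a set S, and let L be a cut of Z (a linear order on S inducing Z). Then for every non-trivial interval I of Z there are unique elements v and w of 𝒮(Z) \ S such that I = [v, w] ∩ S in the cyclic order 𝒵(Z); that is, 𝒵(Z) is a cycle completion of Z. -/

import Mathlib

def IsCyclicOrder {S : Type*} (Z : Set (S × S × S)) : Prop :=
  (∀ a b c : S, (a, b, c) ∈ Z → (b, c, a) ∈ Z) ∧
  (∀ a b c : S, (a, b, c) ∈ Z → (c, b, a) ∉ Z) ∧
  (∀ a b c : S, a ≠ b → b ≠ c → a ≠ c → (a, b, c) ∉ Z → (c, b, a) ∈ Z) ∧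
  (∀ a b c d : S, (a, b, c) ∈ Z → (a, c, d) ∈ Z → (a, b, d) ∈ Z)

/-- The closed interval `[s,t]` of a cyclic order. -/
def cycInterval {S : Type*} (Z : Set (S × S × S)) (s t : S) : Set S :=
  {s, t} ∪ {c | (s, c, t) ∈ Z}

/-- The open interval `]s,t[` of a cyclic order. -/
def cycOpen {S : Type*} (Z : Set (S × S × S)) (s t : S) : Set S :=
  {c | (s, c, t) ∈ Z}

/-- A subset `I` is an interval of the cyclic order `Z`. -/
def IsInterval {S : Type*} (Z : Set (S × S × S)) (I : Set S) : Prop :=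
  ∀ s ∈ I, ∀ t ∈ I, cycInterval Z s t ⊆ I ∨ cycInterval Z t s ⊆ I

/-- The cyclic order induced on a subset `A`. -/
def inducedCycOrder {S : Type*} (Z : Set (S × S × S)) (A : Set S) : Set (S × S × S) :=
  {p | p ∈ Z ∧ p.1 ∈ A ∧ p.2.1 ∈ A ∧ p.2.2 ∈ A}

/-- `T` (a cyclic order on the whole type `R`) is a cycle completion of the cyclic order
it induces on the subset `S`: every non-trivial interval of the induced order on `S` is
uniquely of the form `[v,w]_T ∩ S` with `v, w ∉ S`. -/
def IsCycleCompletion {R : Type*} (T : Set (R × R × R)) (S : Set R) : Prop :=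
  IsCyclicOrder T ∧
  ∀ I : Set R, I ⊆ S → IsInterval (inducedCycOrder T S) I → I.Nonempty → I ≠ S →
    ∃! vw : R × R, vw.1 ∉ S ∧ vw.2 ∉ S ∧ cycInterval T vw.1 vw.2 ∩ S = I

/-- A map between cyclically ordered sets is monotone. -/
def CycMonotone {S S' : Type*} (Z : Set (S × S × S)) (Z' : Set (S' × S' × S'))
    (f : S → S') : Prop :=
  ∀ a b c : S, (f a, f b, f c) ∈ Z' → (a, b, c) ∈ Z

/-- `le` is a (reflexive, antisymmetric, transitive, total) linear order relation. -/
def IsLinRel {S : Type*} (le : S → S → Prop) : Prop :=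
  (∀ a, le a a) ∧ (∀ a b, le a b → le b a → a = b) ∧
  (∀ a b c, le a b → le b c → le a c) ∧ (∀ a b, le a b ∨ le b a)

/-- The strict relation associated with `le`. -/
def relLt {S : Type*} (le : S → S → Prop) (a b : S) : Prop := le a b ∧ a ≠ b

/-- The cyclic order induced by a linear order relation. -/
def cycOfLin {S : Type*} (le : S → S → Prop) : Set (S × S × S) :=
  {p | (relLt le p.1 p.2.1 ∧ relLt le p.2.1 p.2.2) ∨
       (relLt le p.2.1 p.2.2 ∧ relLt le p.2.2 p.1) ∨
       (relLt le p.2.2 p.1 ∧ relLt le p.1 p.2.1)}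

/-- `le` is a cut of the cyclic order `Z`: a linear order inducing `Z`. -/
def IsCut {S : Type*} (Z : Set (S × S × S)) (le : S → S → Prop) : Prop :=
  IsLinRel le ∧ cycOfLin le = Z

/-- An initial segment of the relation `le`. -/
def RInitSeg {S : Type*} (le : S → S → Prop) (A : Set S) : Prop :=
  ∀ s ∈ A, ∀ t, le t s → t ∈ A

/-- The ground set `V'(L) = S ∪ (V(L) \ {S})` of the completed linear order,
inside the ambient type `S ⊕ Set S`. -/
def Vprime {S : Type*} (le : S → S → Prop) : Set (S ⊕ Set S) :=
  Set.range Sum.inl ∪ {x | ∃ A : Set S, RInitSeg le A ∧ A ≠ Set.univ ∧ x = Sum.inr A}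

/-- The linear order `D'(L)` interleaving `S` with its initial segments. -/
def Dple {S : Type*} (le : S → S → Prop) : S ⊕ Set S → S ⊕ Set S → Prop
  | Sum.inl x, Sum.inl y => le x y
  | Sum.inr A, Sum.inr B => A ⊆ B
  | Sum.inl x, Sum.inr A => x ∈ A
  | Sum.inr A, Sum.inl x => x ∉ A

/-- The cyclic order `Z(L)` on `V'(L)` induced by `D'(L)`. -/
def ZL {S : Type*} (le : S → S → Prop) :
    Set ((S ⊕ Set S) × (S ⊕ Set S) × (S ⊕ Set S)) :=
  inducedCycOrder (cycOfLin (Dple le)) (Vprime le)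

/-- The map `η_L` sending an element of `S` to itself and an initial segment `A`
to the cut `(L ↾ (S \ A)) ⊕ (L ↾ A)`. -/
def cutEta {S : Type*} (le : S → S → Prop) : S ⊕ Set S → S ⊕ (S → S → Prop)
  | Sum.inl s => Sum.inl s
  | Sum.inr A => Sum.inr (fun x y => (x ∉ A ∧ y ∈ A) ∨ ((x ∈ A ↔ y ∈ A) ∧ le x y))

/-- The cyclic order `𝒵(Z)` on `S ∪ 𝒱`, obtained as the image of `Z(L)` under `η_L`. -/
def calZ {S : Type*} (le : S → S → Prop) :
    Set ((S ⊕ (S → S → Prop)) × (S ⊕ (S → S → Prop)) × (S ⊕ (S → S → Prop))) :=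
  {t | ∃ p ∈ ZL le, t = (cutEta le p.1, cutEta le p.2.1, cutEta le p.2.2)}

/-- The ground set `𝒮(Z) = S ∪ 𝒱`, where `𝒱` is the set of cuts of `Z`. -/
def calS {S : Type*} (Z : Set (S × S × S)) : Set (S ⊕ (S → S → Prop)) :=
  Set.range Sum.inl ∪ {x | ∃ c, IsCut Z c ∧ x = Sum.inr c}

section Helpers

variable {S : Type*}

/-- The relation obtained from `le` by rotating at the initial segment `A`. -/
def relA (le : S → S → Prop) (A : Set S) : S → S → Prop :=
  fun x y => (x ∉ A ∧ y ∈ A) ∨ ((x ∈ A ↔ y ∈ A) ∧ le x y)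

lemma cutEta_inr (le : S → S → Prop) (A : Set S) :
    cutEta le (Sum.inr A) = Sum.inr (relA le A) := rfl

/-- Convexity with respect to a linear relation. -/
def RConvex (le : S → S → Prop) (I : Set S) : Prop :=
  ∀ a ∈ I, ∀ c ∈ I, ∀ b, le a b → le b c → b ∈ I

/-- Membership pattern for the open cyclic interval between cuts `A` and `B`. -/
def Mrel (A B : Set S) (s : S) : Prop :=
  (s ∉ A ∧ s ∈ B) ∨ (s ∈ B ∧ (B ⊆ A ∧ B ≠ A)) ∨ ((B ⊆ A ∧ B ≠ A) ∧ s ∉ A)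

def lowSet (le : S → S → Prop) (J : Set S) : Set S := {x | x ∉ J ∧ ∃ s ∈ J, le x s}

lemma initseg_comparable {le : S → S → Prop} (hle : IsLinRel le) {A B : Set S}
    (hA : RInitSeg le A) (hB : RInitSeg le B) : A ⊆ B ∨ B ⊆ A := by
  by_cases h : A ⊆ B
  · exact Or.inl h
  · right
    obtain ⟨a, haA, haB⟩ := Set.not_subset.mp h
    intro x hxB
    rcases hle.2.2.2 x a with hxa | hax
    · exact hA a haA x hxa
    · exact absurd (hB x hxB a hax) haB

lemma relA_isLin {le : S → S → Prop} (hle : IsLinRel le) {A : Set S}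
    (hA : RInitSeg le A) : IsLinRel (relA le A) := by
  obtain ⟨hrefl, hanti, htrans, htot⟩ := hle
  refine ⟨fun a => Or.inr ⟨Iff.rfl, hrefl a⟩, ?_, ?_, ?_⟩
  · rintro a b (⟨ha, hb⟩ | ⟨hab, h1⟩) (⟨hb', ha'⟩ | ⟨hba, h2⟩)
    · exact absurd hb hb'
    · exact absurd (hba.mp hb) ha
    · exact absurd (hab.mp ha') hb'
    · exact hanti a b h1 h2
  · rintro a b c (⟨ha, hb⟩ | ⟨hab, h1⟩) (⟨hb', hc⟩ | ⟨hbc, h2⟩)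
    · exact absurd hb hb'
    · exact Or.inl ⟨ha, hbc.mp hb⟩
    · exact Or.inl ⟨fun h => hb' (hab.mp h), hc⟩
    · exact Or.inr ⟨hab.trans hbc, htrans a b c h1 h2⟩
  · intro a b
    by_cases ha : a ∈ A <;> by_cases hb : b ∈ A
    · rcases htot a b with h | h
      · exact Or.inl (Or.inr ⟨by simp [ha, hb], h⟩)
      · exact Or.inr (Or.inr ⟨by simp [ha, hb], h⟩)
    · exact Or.inr (Or.inl ⟨hb, ha⟩)
    · exact Or.inl (Or.inl ⟨ha, hb⟩)
    · rcases htot a b with h | h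
      · exact Or.inl (Or.inr ⟨by simp [ha, hb], h⟩)
      · exact Or.inr (Or.inr ⟨by simp [ha, hb], h⟩)

lemma cycOfLin_rot {le : S → S → Prop} {a b c : S} :
    (a, b, c) ∈ cycOfLin le ↔ (b, c, a) ∈ cycOfLin le := by
  simp only [cycOfLin, Set.mem_setOf_eq]
  tauto

lemma relLt_relA_same {le : S → S → Prop} {A : Set S} {x y : S}
    (h : relLt le x y) (hm : x ∈ A ↔ y ∈ A) : relLt (relA le A) x y :=
  ⟨Or.inr ⟨hm, h.1⟩, h.2⟩

lemma relLt_relA_cross {le : S → S → Prop} {A : Set S} {x y : S}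
    (hx : x ∉ A) (hy : y ∈ A) : relLt (relA le A) x y :=
  ⟨Or.inl ⟨hx, hy⟩, fun h => hx (h ▸ hy)⟩

lemma cycOfLin_subset_relA {le : S → S → Prop} (hle : IsLinRel le) {A : Set S}
    (hA : RInitSeg le A) : cycOfLin le ⊆ cycOfLin (relA le A) := by
  have key : ∀ a b c : S, relLt le a b → relLt le b c →
      (a, b, c) ∈ cycOfLin (relA le A) := by
    intro a b c h1 h2
    by_cases hb : b ∈ A
    · have ha : a ∈ A := hA b hb a h1.1
      by_cases hc : c ∈ A
      · exact Or.inl ⟨relLt_relA_same h1 (by simp [ha, hb]),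
          relLt_relA_same h2 (by simp [hb, hc])⟩
      · exact Or.inr (Or.inr ⟨relLt_relA_cross hc ha,
          relLt_relA_same h1 (by simp [ha, hb])⟩)
    · have hc : c ∉ A := fun h => hb (hA c h b h2.1)
      by_cases ha : a ∈ A
      · exact Or.inr (Or.inl ⟨relLt_relA_same h2 (by simp [hb, hc]),
          relLt_relA_cross hc ha⟩)
      · exact Or.inl ⟨relLt_relA_same h1 (by simp [ha, hb]),
          relLt_relA_same h2 (by simp [hb, hc])⟩
  rintro ⟨a, b, c⟩ (⟨h1, h2⟩ | ⟨h1, h2⟩ | ⟨h1, h2⟩)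
  · exact key a b c h1 h2
  · exact cycOfLin_rot.mpr (key b c a h1 h2)
  · exact cycOfLin_rot.mp (key c a b h1 h2)

lemma compl_initseg_relA {le : S → S → Prop} (hle : IsLinRel le) {A : Set S}
    (hA : RInitSeg le A) : RInitSeg (relA le A) Aᶜ := by
  rintro s hs t (⟨htA, hsA⟩ | ⟨hts, _⟩)
  · exact absurd hsA hs
  · exact fun htA => hs (hts.mp htA)

lemma relA_relA_compl {le : S → S → Prop} (hle : IsLinRel le) {A : Set S}
    (hA : RInitSeg le A) : relA (relA le A) Aᶜ = le := by
  funext x y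
  apply propext
  constructor
  · rintro (⟨hx, hy⟩ | ⟨hm, ⟨hx', hy'⟩ | ⟨hm', h⟩⟩)
    · -- x ∈ A, y ∉ A
      simp only [Set.mem_compl_iff, not_not] at hx
      rcases hle.2.2.2 x y with h | h
      · exact h
      · exact absurd (hA x hx y h) hy
    · -- hm : x ∈ Aᶜ ↔ y ∈ Aᶜ, but x ∉ A, y ∈ A
      simp only [Set.mem_compl_iff] at hm
      exact absurd hy' (hm.mp hx')
    · exact h
  · intro h
    by_cases hx : x ∈ A <;> by_cases hy : y ∈ A
    · exact Or.inr ⟨by simp [hx, hy], Or.inr ⟨by simp [hx, hy], h⟩⟩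
    · exact Or.inl ⟨by simp [hx], by simp [hy]⟩
    · exact absurd (hA y hy x h) hx
    · exact Or.inr ⟨by simp [hx, hy], Or.inr ⟨by simp [hx, hy], h⟩⟩

lemma cycOfLin_relA {le : S → S → Prop} (hle : IsLinRel le) {A : Set S}
    (hA : RInitSeg le A) : cycOfLin (relA le A) = cycOfLin le := by
  apply subset_antisymm
  · have h1 := cycOfLin_subset_relA (relA_isLin hle hA) (compl_initseg_relA hle hA)
    rwa [relA_relA_compl hle hA] at h1
  · exact cycOfLin_subset_relA hle hA

lemma relA_ne {le : S → S → Prop} (hle : IsLinRel le) {A B : Set S}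
    (hA : RInitSeg le A) (hAu : A ≠ Set.univ) (hBA : B ⊆ A) (hne : B ≠ A) :
    relA le A ≠ relA le B := by
  have hex : ∃ s, s ∈ A ∧ s ∉ B := by
    by_contra h
    push_neg at h
    exact hne (Set.Subset.antisymm hBA h)
  obtain ⟨s, hsA, hsB⟩ := hex
  obtain ⟨t, htA⟩ : ∃ t, t ∉ A := by
    by_contra h
    push_neg at h
    exact hAu (Set.eq_univ_iff_forall.mpr h)
  intro heq
  have h1 : relA le A t s := Or.inl ⟨htA, hsA⟩
  rw [heq] at h1
  rcases h1 with ⟨_, hsB'⟩ | ⟨_, hts⟩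
  · exact hsB hsB'
  · exact htA (hA s hsA t hts)

lemma relA_inj {le : S → S → Prop} (hle : IsLinRel le) {A B : Set S}
    (hA : RInitSeg le A) (hB : RInitSeg le B) (hAu : A ≠ Set.univ) (hBu : B ≠ Set.univ)
    (h : relA le A = relA le B) : A = B := by
  by_contra hne
  rcases initseg_comparable hle hA hB with hAB | hBA
  · exact relA_ne hle hB hBu hAB hne h.symm
  · exact relA_ne hle hA hAu hBA (fun hh => hne hh.symm) h

end Helpers
section Bridge

variable {S : Type*}

lemma inl_mem_Vprime {le : S → S → Prop} (s : S) : Sum.inl s ∈ Vprime le :=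
  Or.inl ⟨s, rfl⟩

lemma inr_mem_Vprime {le : S → S → Prop} {A : Set S} :
    Sum.inr A ∈ Vprime le ↔ RInitSeg le A ∧ A ≠ Set.univ := by
  constructor
  · rintro (⟨x, hx⟩ | ⟨A', h1, h2, h3⟩)
    · exact absurd hx (by simp)
    · cases Sum.inr.inj h3
      exact ⟨h1, h2⟩
  · rintro ⟨h1, h2⟩
    exact Or.inr ⟨A, h1, h2, rfl⟩

lemma mem_cycDple {le : S → S → Prop} {A B : Set S} {s : S} :
    ((Sum.inr A, Sum.inl s, Sum.inr B) :
      (S ⊕ Set S) × (S ⊕ Set S) × (S ⊕ Set S)) ∈ cycOfLin (Dple le) ↔ Mrel A B s := by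
  have h1 : relLt (Dple le) (Sum.inr A) (Sum.inl s) ↔ s ∉ A := by
    simp [relLt, Dple]
  have h2 : relLt (Dple le) (Sum.inl s) (Sum.inr B) ↔ s ∈ B := by
    simp [relLt, Dple]
  have h3 : relLt (Dple le) (Sum.inr B) (Sum.inr A) ↔ (B ⊆ A ∧ B ≠ A) := by
    simp [relLt, Dple]
  simp only [cycOfLin, Set.mem_setOf_eq, Mrel, h1, h2, h3]

lemma mem_ZL_iff {le : S → S → Prop} {A B : Set S} {s : S}
    (hA : RInitSeg le A) (hAu : A ≠ Set.univ) (hB : RInitSeg le B) (hBu : B ≠ Set.univ) :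
    ((Sum.inr A, Sum.inl s, Sum.inr B) :
      (S ⊕ Set S) × (S ⊕ Set S) × (S ⊕ Set S)) ∈ ZL le ↔ Mrel A B s := by
  constructor
  · exact fun h => mem_cycDple.mp h.1
  · intro h
    exact ⟨mem_cycDple.mpr h, inr_mem_Vprime.mpr ⟨hA, hAu⟩, inl_mem_Vprime s,
      inr_mem_Vprime.mpr ⟨hB, hBu⟩⟩

lemma mem_calZ_iff {le : S → S → Prop} (hle : IsLinRel le) {A B : Set S}
    (hA : RInitSeg le A) (hAu : A ≠ Set.univ) (hB : RInitSeg le B) (hBu : B ≠ Set.univ)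
    (s : S) :
    ((Sum.inr (relA le A), Sum.inl s, Sum.inr (relA le B)) :
      (S ⊕ (S → S → Prop)) × (S ⊕ (S → S → Prop)) × (S ⊕ (S → S → Prop))) ∈ calZ le
      ↔ Mrel A B s := by
  constructor
  · rintro ⟨⟨p1, p2, p3⟩, hp, heq⟩
    obtain ⟨hq1, hq2, hq3⟩ : Sum.inr (relA le A) = cutEta le p1 ∧
        Sum.inl s = cutEta le p2 ∧ Sum.inr (relA le B) = cutEta le p3 := by
      refine ⟨congrArg Prod.fst heq, ?_, ?_⟩
      · exact congrArg (fun t => t.2.1) heq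
      · exact congrArg (fun t => t.2.2) heq
    obtain ⟨hcyc, hV1, hV2, hV3⟩ := hp
    -- p1 must be some inr A' with A' = A
    rcases p1 with x | A'
    · exact absurd hq1 (by simp [cutEta])
    rcases p3 with x | B'
    · exact absurd hq3 (by simp [cutEta])
    rcases p2 with s' | C
    swap
    · exact absurd hq2 (by simp [cutEta])
    obtain ⟨hA', hA'u⟩ := inr_mem_Vprime.mp hV1
    obtain ⟨hB', hB'u⟩ := inr_mem_Vprime.mp hV3
    have es : s = s' := Sum.inl.inj hq2
    have eA : A = A' :=
      relA_inj hle hA hA' hAu hA'u (Sum.inr.inj (hq1 : _ = Sum.inr (relA le A')))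
    have eB : B = B' :=
      relA_inj hle hB hB' hBu hB'u (Sum.inr.inj (hq3 : _ = Sum.inr (relA le B')))
    subst es; subst eA; subst eB
    exact mem_cycDple.mp hcyc
  · intro h
    exact ⟨(Sum.inr A, Sum.inl s, Sum.inr B), (mem_ZL_iff hA hAu hB hBu).mpr h, rfl⟩

lemma interval_eq {le : S → S → Prop} (hle : IsLinRel le) {A B : Set S} {I : Set S}
    (hA : RInitSeg le A) (hAu : A ≠ Set.univ) (hB : RInitSeg le B) (hBu : B ≠ Set.univ)
    (hM : ∀ s, Mrel A B s ↔ s ∈ I) :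
    cycInterval (calZ le) (Sum.inr (relA le A)) (Sum.inr (relA le B)) ∩
      Set.range Sum.inl = Sum.inl '' I := by
  ext x
  constructor
  · rintro ⟨hx, s, rfl⟩
    refine ⟨s, ?_, rfl⟩
    rcases hx with (h | h) | h
    · exact absurd h (by simp)
    · exact absurd h (by simp)
    · exact (hM s).mp ((mem_calZ_iff hle hA hAu hB hBu s).mp h)
  · rintro ⟨s, hs, rfl⟩
    exact ⟨Or.inr ((mem_calZ_iff hle hA hAu hB hBu s).mpr ((hM s).mpr hs)), s, rfl⟩

end Bridge
section Core

variable {S : Type*}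

lemma Mrel_self {A : Set S} {s : S} : ¬ Mrel A A s := by
  rintro (⟨h1, h2⟩ | ⟨_, _, h⟩ | ⟨⟨_, h⟩, _⟩) <;> first | exact h1 h2 | exact h rfl

lemma Mrel_of_lt {A B : Set S} (hAB : A ⊆ B) (s : S) :
    Mrel A B s ↔ (s ∈ B ∧ s ∉ A) := by
  constructor
  · rintro (⟨h1, h2⟩ | ⟨_, hBA, hne⟩ | ⟨⟨hBA, hne⟩, _⟩)
    · exact ⟨h2, h1⟩
    · exact absurd (Set.Subset.antisymm hBA hAB) hne
    · exact absurd (Set.Subset.antisymm hBA hAB) hne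
  · rintro ⟨h1, h2⟩
    exact Or.inl ⟨h2, h1⟩

lemma Mrel_of_gt {A B : Set S} (hBA : B ⊆ A) (hne : B ≠ A) (s : S) :
    Mrel A B s ↔ (s ∈ B ∨ s ∉ A) := by
  constructor
  · rintro (⟨h1, h2⟩ | ⟨h, _⟩ | ⟨_, h⟩)
    · exact Or.inl h2
    · exact Or.inl h
    · exact Or.inr h
  · rintro (h | h)
    · exact Or.inr (Or.inl ⟨h, hBA, hne⟩)
    · exact Or.inr (Or.inr ⟨⟨hBA, hne⟩, h⟩)

lemma slab_rec {le : S → S → Prop} (hle : IsLinRel le) {A B : Set S}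
    (hA : RInitSeg le A) (hB : RInitSeg le B) (hAB : A ⊆ B) (hne : (B \ A).Nonempty) :
    A = lowSet le (B \ A) ∧ B = lowSet le (B \ A) ∪ (B \ A) := by
  obtain ⟨s0, hs0B, hs0A⟩ := hne
  have hAlow : A = lowSet le (B \ A) := by
    ext x
    constructor
    · intro hx
      refine ⟨fun h => h.2 hx, s0, ⟨hs0B, hs0A⟩, ?_⟩
      rcases hle.2.2.2 x s0 with h | h
      · exact h
      · exact absurd (hA x hx s0 h) hs0A
    · rintro ⟨hx, s, ⟨hsB, hsA⟩, hxs⟩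
      have hxB : x ∈ B := hB s hsB x hxs
      by_contra hxA
      exact hx ⟨hxB, hxA⟩
  refine ⟨hAlow, ?_⟩
  ext x
  constructor
  · intro hx
    by_cases hxA : x ∈ A
    · exact Or.inl (hAlow ▸ hxA)
    · exact Or.inr ⟨hx, hxA⟩
  · rintro (hx | hx)
    · exact hAB (hAlow ▸ hx)
    · exact hx.1

lemma cross_case {le : S → S → Prop} (hle : IsLinRel le) {A B A' B' : Set S} {I : Set S}
    (hA : RInitSeg le A) (hB : RInitSeg le B) (hA' : RInitSeg le A') (hB' : RInitSeg le B')
    (hBu : B ≠ Set.univ) (hA'u : A' ≠ Set.univ)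
    (h1 : ∀ s, s ∈ I ↔ (s ∈ B ∧ s ∉ A)) (h2 : ∀ s, s ∈ I ↔ (s ∈ B' ∨ s ∉ A'))
    (hne : I.Nonempty) : False := by
  obtain ⟨s0, hs0⟩ := hne
  obtain ⟨hs0B, hs0A⟩ := (h1 s0).mp hs0
  obtain ⟨t, htB⟩ : ∃ t, t ∉ B := by
    by_contra h
    push_neg at h
    exact hBu (Set.eq_univ_iff_forall.mpr h)
  have htI : t ∉ I := fun h => htB ((h1 t).mp h).1
  have ht2 : t ∉ B' ∧ t ∈ A' := by
    have h : ¬ (t ∈ B' ∨ t ∉ A') := fun h => htI ((h2 t).mpr h)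
    push_neg at h
    exact h
  have hs0t : le s0 t := by
    rcases hle.2.2.2 s0 t with h | h
    · exact h
    · exact absurd (hB s0 hs0B t h) htB
  by_cases hAe : ∃ a, a ∈ A
  · obtain ⟨a, haA⟩ := hAe
    have haI : a ∉ I := fun h => ((h1 a).mp h).2 haA
    have ha2 : a ∉ B' ∧ a ∈ A' := by
      have h : ¬ (a ∈ B' ∨ a ∉ A') := fun h => haI ((h2 a).mpr h)
      push_neg at h
      exact h
    have has0 : le a s0 := by
      rcases hle.2.2.2 a s0 with h | h
      · exact h
      · exact absurd (hA a haA s0 h) hs0A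
    rcases (h2 s0).mp hs0 with h | h
    · exact ha2.1 (hB' s0 h a has0)
    · exact h (hA' t ht2.2 s0 hs0t)
  · push_neg at hAe
    obtain ⟨z, hzA'⟩ : ∃ z, z ∉ A' := by
      by_contra h
      push_neg at h
      exact hA'u (Set.eq_univ_iff_forall.mpr h)
    have hzI : z ∈ I := (h2 z).mpr (Or.inr hzA')
    have hzB : z ∈ B := ((h1 z).mp hzI).1
    have htz : le t z := by
      rcases hle.2.2.2 t z with h | h
      · exact h
      · exact absurd (hA' t ht2.2 z h) hzA'
    exact htB (hB z hzB t htz)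

lemma rep_unique {le : S → S → Prop} (hle : IsLinRel le) {A B A' B' : Set S} {I : Set S}
    (hA : RInitSeg le A) (hB : RInitSeg le B) (hA' : RInitSeg le A') (hB' : RInitSeg le B')
    (hAu : A ≠ Set.univ) (hBu : B ≠ Set.univ) (hA'u : A' ≠ Set.univ) (hB'u : B' ≠ Set.univ)
    (hM : ∀ s, Mrel A B s ↔ s ∈ I) (hM' : ∀ s, Mrel A' B' s ↔ s ∈ I)
    (hne : I.Nonempty) : A = A' ∧ B = B' := by
  obtain ⟨s0, hs0⟩ := hne
  have hABne : A ≠ B := by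
    rintro rfl
    exact Mrel_self ((hM s0).mpr hs0)
  have hABne' : A' ≠ B' := by
    rintro rfl
    exact Mrel_self ((hM' s0).mpr hs0)
  rcases initseg_comparable hle hA hB with hAB | hBA <;>
    rcases initseg_comparable hle hA' hB' with hAB' | hBA'
  · -- both slabs: I = B \ A = B' \ A'
    have e1 : B \ A = I := by
      ext s
      rw [← hM s, Mrel_of_lt hAB]
      exact ⟨fun h => ⟨h.1, h.2⟩, fun h => ⟨h.1, h.2⟩⟩
    have e2 : B' \ A' = I := by
      ext s
      rw [← hM' s, Mrel_of_lt hAB']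
      exact ⟨fun h => ⟨h.1, h.2⟩, fun h => ⟨h.1, h.2⟩⟩
    have hne1 : (B \ A).Nonempty := ⟨s0, e1 ▸ hs0⟩
    have hne2 : (B' \ A').Nonempty := ⟨s0, e2 ▸ hs0⟩
    obtain ⟨r1, r2⟩ := slab_rec hle hA hB hAB hne1
    obtain ⟨r1', r2'⟩ := slab_rec hle hA' hB' hAB' hne2
    rw [e1] at r1 r2
    rw [e2] at r1' r2'
    exact ⟨r1.trans r1'.symm, r2.trans r2'.symm⟩
  · -- first slab, second wrap: contradiction
    exact (cross_case hle hA hB hA' hB' hBu hA'u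
      (fun s => by rw [← hM s, Mrel_of_lt hAB])
      (fun s => by rw [← hM' s, Mrel_of_gt hBA' (fun h => hABne' h.symm)]) ⟨s0, hs0⟩).elim
  · -- first wrap, second slab: contradiction
    exact (cross_case hle hA' hB' hA hB hB'u hAu
      (fun s => by rw [← hM' s, Mrel_of_lt hAB'])
      (fun s => by rw [← hM s, Mrel_of_gt hBA (fun h => hABne h.symm)]) ⟨s0, hs0⟩).elim
  · -- both wraps: Iᶜ = A \ B = A' \ B'
    have e1 : A \ B = Iᶜ := by
      ext s
      simp only [Set.mem_compl_iff, ← hM s, Mrel_of_gt hBA (fun h => hABne h.symm),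
        Set.mem_diff]
      tauto
    have e2 : A' \ B' = Iᶜ := by
      ext s
      simp only [Set.mem_compl_iff, ← hM' s, Mrel_of_gt hBA' (fun h => hABne' h.symm),
        Set.mem_diff]
      tauto
    have hne1 : (A \ B).Nonempty := by
      have : ∃ x, x ∈ A ∧ x ∉ B := by
        by_contra h
        push_neg at h
        exact hABne (Set.Subset.antisymm h hBA)
      obtain ⟨x, hx⟩ := this
      exact ⟨x, hx⟩
    have hne2 : (A' \ B').Nonempty := by
      rw [e2, ← e1]
      exact hne1
    obtain ⟨r1, r2⟩ := slab_rec hle hB hA hBA hne1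
    obtain ⟨r1', r2'⟩ := slab_rec hle hB' hA' hBA' hne2
    rw [e1] at r1 r2
    rw [e2] at r1' r2'
    exact ⟨r2.trans r2'.symm, r1.trans r1'.symm⟩

end Core
section Construct

variable {S : Type*}

lemma interval_dichotomy {le : S → S → Prop} (hle : IsLinRel le) {I : Set S}
    (hI : IsInterval (cycOfLin le) I) (h : ¬ RConvex le I) : RConvex le Iᶜ := by
  obtain ⟨hrefl, hanti, htrans, htot⟩ := hle
  unfold RConvex at h
  push_neg at h
  obtain ⟨a, haI, c, hcI, b, hab, hbc, hbI⟩ := h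
  intro x hxI z hzI y hxy hyz
  by_contra hy
  rw [Set.mem_compl_iff, not_not] at hy
  rw [Set.mem_compl_iff] at hxI hzI
  have hane : a ≠ b := fun h => hbI (h ▸ haI)
  have hbne : b ≠ c := fun h => hbI (h ▸ hcI)
  have hxne : x ≠ y := fun h => hxI (h ▸ hy)
  have hyne : y ≠ z := fun h => hzI (h ▸ hy)
  rcases htot b y with hby | hyb
  · -- b ≤ y : use interval property on a, y
    have hbyne : b ≠ y := fun h => hbI (h ▸ hy)
    rcases hI a haI y hy with hsub | hsub
    · refine hbI (hsub ?_)
      exact Set.mem_union_right _ (Or.inl ⟨⟨hab, hane⟩, ⟨hby, hbyne⟩⟩)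
    · refine hzI (hsub ?_)
      have hay : relLt le a y := ⟨htrans a b y hab hby,
        fun h => hane (hanti a b hab (h ▸ hby))⟩
      exact Set.mem_union_right _ (Or.inr (Or.inr ⟨hay, ⟨hyz, hyne⟩⟩))
  · -- y ≤ b : use interval property on y, c
    have hybne : y ≠ b := fun h => hbI (h ▸ hy)
    rcases hI y hy c hcI with hsub | hsub
    · refine hbI (hsub ?_)
      exact Set.mem_union_right _ (Or.inl ⟨⟨hyb, hybne⟩, ⟨hbc, hbne⟩⟩)
    · refine hxI (hsub ?_)
      have hyc : relLt le y c := ⟨htrans y b c hyb hbc,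
        fun h => hbne (hanti b c hbc (h ▸ hyb))⟩
      exact Set.mem_union_right _ (Or.inr (Or.inl ⟨⟨hxy, hxne⟩, hyc⟩))

lemma lowSet_init {le : S → S → Prop} (hle : IsLinRel le) {J : Set S}
    (hJ : RConvex le J) : RInitSeg le (lowSet le J) := by
  rintro x ⟨hxJ, s, hsJ, hxs⟩ t htx
  refine ⟨fun htJ => hxJ (hJ t htJ s hsJ x htx hxs), s, hsJ, hle.2.2.1 t x s htx hxs⟩

lemma lowSet_union_init {le : S → S → Prop} (hle : IsLinRel le) {J : Set S}
    (hJ : RConvex le J) : RInitSeg le (lowSet le J ∪ J) := by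
  rintro x (hx | hx) t htx
  · exact Or.inl (lowSet_init hle hJ x hx t htx)
  · by_cases htJ : t ∈ J
    · exact Or.inr htJ
    · exact Or.inl ⟨htJ, x, hx, htx⟩

lemma construct {le : S → S → Prop} (hle : IsLinRel le) {I : Set S}
    (hI : IsInterval (cycOfLin le) I) (hne : I.Nonempty) (hnu : I ≠ Set.univ) :
    ∃ A B : Set S, RInitSeg le A ∧ A ≠ Set.univ ∧ RInitSeg le B ∧ B ≠ Set.univ ∧
      ∀ s, Mrel A B s ↔ s ∈ I := by
  obtain ⟨s0, hs0⟩ := hne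
  obtain ⟨z0, hz0⟩ : ∃ z, z ∉ I := by
    by_contra h
    push_neg at h
    exact hnu (Set.eq_univ_iff_forall.mpr h)
  by_cases hconv : RConvex le I
  · set A := lowSet le I with hAdef
    have hAinit : RInitSeg le A := lowSet_init hle hconv
    have hAu : A ≠ Set.univ := fun h => ((h ▸ (Set.mem_univ s0 : s0 ∈ Set.univ)) :
      s0 ∈ A).1 hs0
    by_cases hBu : A ∪ I = Set.univ
    · -- I is a final segment: use (A, ∅), noting A = Iᶜ
      have hAc : ∀ x, x ∈ A ↔ x ∉ I := by
        intro x
        constructor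
        · exact fun h => h.1
        · intro hx
          rcases (hBu ▸ (Set.mem_univ x : x ∈ Set.univ) : x ∈ A ∪ I) with h | h
          · exact h
          · exact absurd h hx
      refine ⟨A, ∅, hAinit, hAu, fun s hs => absurd hs (Set.notMem_empty s), ?_, ?_⟩
      · intro h
        exact (h ▸ (Set.mem_univ s0 : s0 ∈ Set.univ) : s0 ∈ (∅ : Set S))
      · intro s
        have hAne : (∅ : Set S) ≠ A := by
          intro h
          have hz : z0 ∈ A := (hAc z0).mpr hz0
          rw [← h] at hz
          exact hz
        rw [Mrel_of_gt (Set.empty_subset A) hAne]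
        simp only [Set.mem_empty_iff_false, false_or]
        rw [hAc s]
        exact not_not
    · refine ⟨A, A ∪ I, hAinit, hAu, lowSet_union_init hle hconv, hBu, ?_⟩
      intro s
      rw [Mrel_of_lt Set.subset_union_left]
      constructor
      · rintro ⟨hs | hs, hsA⟩
        · exact absurd hs hsA
        · exact hs
      · intro hs
        exact ⟨Or.inr hs, fun h => h.1 hs⟩
  · have hconv' : RConvex le Iᶜ := interval_dichotomy hle hI hconv
    unfold RConvex at hconv
    push_neg at hconv
    obtain ⟨a, haI, c, hcI, b, hab, hbc, hbI⟩ := hconv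
    set B := lowSet le Iᶜ with hBdef
    set A := B ∪ Iᶜ with hAdef
    have hBinit : RInitSeg le B := lowSet_init hle hconv'
    have hAinit : RInitSeg le A := lowSet_union_init hle hconv'
    have hbIc : b ∈ Iᶜ := hbI
    have hBu : B ≠ Set.univ := fun h =>
      ((h ▸ (Set.mem_univ b : b ∈ Set.univ)) : b ∈ B).1 hbIc
    have hcA : c ∉ A := by
      rintro (⟨hcIc, j, hjIc, hcj⟩ | hc)
      · exact hcIc (hconv' b hbIc j hjIc c hbc hcj)
      · exact hc hcI
    have hAu : A ≠ Set.univ := fun h => hcA (h ▸ (Set.mem_univ c))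
    have hBA : B ⊆ A := Set.subset_union_left
    have hBAne : B ≠ A := by
      intro h
      exact (h ▸ (Or.inr hbIc : b ∈ A) : b ∈ B).1 hbIc
    refine ⟨A, B, hAinit, hAu, hBinit, hBu, ?_⟩
    intro s
    rw [Mrel_of_gt hBA hBAne]
    constructor
    · rintro (hs | hs)
      · by_contra hsI
        exact hs.1 hsI
      · by_contra hsI
        exact hs (Or.inr hsI)
    · intro hs
      by_cases hsB : s ∈ B
      · exact Or.inl hsB
      · refine Or.inr ?_
        rintro (h | h)
        · exact hsB h
        · exact h hs
end Construct
lemma relA_isCut {S : Type*} {le : S → S → Prop} {Z : Set (S × S × S)} (hle : IsLinRel le)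
    (hZ : cycOfLin le = Z) {A : Set S} (hA : RInitSeg le A) : IsCut Z (relA le A) :=
  ⟨relA_isLin hle hA, by rw [cycOfLin_relA hle hA, hZ]⟩

/-- `𝒵(Z)` is a cycle completion of `Z`: every non-trivial interval `I` of `Z` is
`[v,w] ∩ S` for unique cutpoints `v, w ∈ 𝒮(Z) \ S`. -/
theorem stmt11 {S : Type*} (Z : Set (S × S × S)) (hZ : IsCyclicOrder Z)
    (le : S → S → Prop) (hL : IsCut Z le)
    (I : Set S) (hI : IsInterval Z I) (hne : I.Nonempty) (hnu : I ≠ Set.univ) :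
    ∃! vw : (S ⊕ (S → S → Prop)) × (S ⊕ (S → S → Prop)),
      vw.1 ∈ calS Z ∧ vw.1 ∉ Set.range Sum.inl ∧
      vw.2 ∈ calS Z ∧ vw.2 ∉ Set.range Sum.inl ∧
      cycInterval (calZ le) vw.1 vw.2 ∩ Set.range Sum.inl = Sum.inl '' I := by
  obtain ⟨hle, hZeq⟩ := hL
  rw [← hZeq] at hI
  obtain ⟨A, B, hA, hAu, hB, hBu, hM⟩ := construct hle hI hne hnu
  refine ⟨(Sum.inr (relA le A), Sum.inr (relA le B)), ⟨?_, ?_, ?_, ?_, ?_⟩, ?_⟩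
  · exact Or.inr ⟨relA le A, relA_isCut hle hZeq hA, rfl⟩
  · rintro ⟨x, h⟩
    exact Sum.inl_ne_inr h
  · exact Or.inr ⟨relA le B, relA_isCut hle hZeq hB, rfl⟩
  · rintro ⟨x, h⟩
    exact Sum.inl_ne_inr h
  · exact interval_eq hle hA hAu hB hBu hM
  · rintro ⟨v, w⟩ ⟨hv, hvn, hw, hwn, hset⟩
    obtain ⟨s0, hs0⟩ := hne
    have hmem : Sum.inl s0 ∈ cycInterval (calZ le) v w ∩ Set.range Sum.inl := by
      rw [hset]
      exact ⟨s0, hs0, rfl⟩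
    rcases hmem.1 with (h | h) | h
    · exact absurd ⟨s0, h⟩ hvn
    · exact absurd ⟨s0, h⟩ hwn
    obtain ⟨⟨p1, p2, p3⟩, hp, heq⟩ := h
    obtain ⟨hcyc, hV1, hV2, hV3⟩ := hp
    have hveq : v = cutEta le p1 := congrArg Prod.fst heq
    have hweq : w = cutEta le p3 := congrArg (fun t => t.2.2) heq
    rcases p1 with x | A'
    · exact absurd ⟨x, hveq.symm⟩ hvn
    rcases p3 with x | B'
    · exact absurd ⟨x, hweq.symm⟩ hwn
    obtain ⟨hA', hA'u⟩ := inr_mem_Vprime.mp hV1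
    obtain ⟨hB', hB'u⟩ := inr_mem_Vprime.mp hV3
    rw [cutEta_inr] at hveq hweq
    have hM' : ∀ s, Mrel A' B' s ↔ s ∈ I := by
      intro s
      rw [← mem_calZ_iff hle hA' hA'u hB' hB'u s]
      constructor
      · intro hmm
        have hin : Sum.inl s ∈ cycInterval (calZ le) v w ∩ Set.range Sum.inl := by
          refine ⟨?_, s, rfl⟩
          rw [hveq, hweq]
          exact Or.inr hmm
        rw [hset] at hin
        exact Sum.inl_injective.mem_set_image.mp hin
      · intro hsI
        have hin : Sum.inl s ∈ cycInterval (calZ le) v w ∩ Set.range Sum.inl := by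
          rw [hset]
          exact ⟨s, hsI, rfl⟩
        rcases hin.1 with (hh | hh) | hh
        · exact absurd ⟨s, hh⟩ hvn
        · exact absurd ⟨s, hh⟩ hwn
        · rw [hveq, hweq] at hh
          exact hh
    obtain ⟨eA, eB⟩ := rep_unique hle hA' hB' hA hB hA'u hB'u hAu hBu hM' hM ⟨s0, hs0⟩
    rw [Prod.ext_iff]
    exact ⟨by rw [hveq, eA], by rw [hweq, eB]⟩
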